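/- Let K ≥ 2, r an integer with 0 ≤ r ≤ K, and for k = r+1,...,K let P_k ∈ [0,1). For a fixed l ≥ 0 and a reordering s_1,...,s_{K-r} of {r+1,...,K}, the sum over all nonempty subsets Ψ of {r+1,...,K} of l·(∏_{j∈Ψ} P_j)·(∏_{j∈{r+1,...,K}\Ψ} (1-P_j))·max_{i∈Ψ} [w_i(1-P_i)/P_i], where the max is attained at the minimal reorder index, equals Σ_{i=1}^{K-r} l·w_{s_i}·∏_{j=1}^{i} (1-P_{s_j}), provided w_{s_1}(1-P_{s_1})/P_{s_1} ≥ ... ≥ w_{s_{K-r}}(1-P_{s_{K-r}})/P_{s_{K-r}} and all P_k > 0. -/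

import Mathlib

open Finset in
/-- Shuffle-load identity: with high-computation-load nodes indexed by `Fin n`
(already reordered so that `i ↦ w i * (1 - P i) / P i` is nonincreasing, so the
max over a nonempty subset `Ψ` is attained at its minimal index), the total
coded-multicast load
`∑_{∅ ≠ Ψ ⊆ [n]} l * (∏_{j∈Ψ} P j) * (∏_{j∉Ψ} (1 - P j)) * max_{i∈Ψ} w i (1-P i)/P i`
equals `∑_{i} l * w i * ∏_{j ≤ i} (1 - P j)`. -/
theorem stmt_4 (n : ℕ) (hn : 1 ≤ n) (l : ℝ) (hl : 0 ≤ l)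
    (P w : Fin n → ℝ) (hP0 : ∀ i, 0 < P i) (hP1 : ∀ i, P i < 1)
    (hw : ∀ i j : Fin n, i ≤ j →
      w j * (1 - P j) / P j ≤ w i * (1 - P i) / P i) :
    ∑ Ψ ∈ (Finset.univ : Finset (Fin n)).powerset,
      (if h : Ψ.Nonempty then
        l * (∏ j ∈ Ψ, P j) * (∏ j ∈ Ψᶜ, (1 - P j)) *
          (w (Ψ.min' h) * (1 - P (Ψ.min' h)) / P (Ψ.min' h))
      else 0)
    = ∑ i : Fin n, l * w i * ∏ j ∈ Finset.univ.filter (· ≤ i), (1 - P j) := by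
  classical
  set F : Finset (Fin n) → ℝ := fun Ψ =>
    if h : Ψ.Nonempty then
      l * (∏ j ∈ Ψ, P j) * (∏ j ∈ Ψᶜ, (1 - P j)) *
        (w (Ψ.min' h) * (1 - P (Ψ.min' h)) / P (Ψ.min' h))
    else 0 with hF
  have hmin : ∀ (i : Fin n) (S : Finset (Fin n)), S ⊆ Ioi i →
      ∀ h : (insert i S).Nonempty, (insert i S).min' h = i := by
    intro i S hS h
    refine le_antisymm (Finset.min'_le _ _ (mem_insert_self i S)) (Finset.le_min' _ _ _ ?_)
    intro y hy
    rcases Finset.mem_insert.1 hy with rfl | hy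
    · exact le_refl _
    · exact le_of_lt (Finset.mem_Ioi.1 (hS hy))
  have step1 : ∑ Ψ ∈ (Finset.univ : Finset (Fin n)).powerset, F Ψ
      = ∑ p ∈ (Finset.univ : Finset (Fin n)).sigma (fun i => (Ioi i).powerset),
          F (insert p.1 p.2) := by
    rw [← Finset.sum_filter_of_ne (p := Finset.Nonempty)
      (fun Ψ _ hne => by by_contra h; simp [hF, h] at hne)]
    refine Finset.sum_nbij'
      (i := fun Ψ => if h : Ψ.Nonempty then
        (⟨Ψ.min' h, Ψ.erase (Ψ.min' h)⟩ : Σ _ : Fin n, Finset (Fin n)) else ⟨⟨0, hn⟩, ∅⟩)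
      (j := fun p => insert p.1 p.2) ?_ ?_ ?_ ?_ ?_
    · intro Ψ hΨ
      have h : Ψ.Nonempty := (Finset.mem_filter.1 hΨ).2
      simp only [dif_pos h, Finset.mem_sigma, Finset.mem_univ, Finset.mem_powerset, true_and]
      intro x hx
      have hxΨ := Finset.mem_of_mem_erase hx
      exact Finset.mem_Ioi.2 (lt_of_le_of_ne (Finset.min'_le _ _ hxΨ)
        (Ne.symm (Finset.ne_of_mem_erase hx)))
    · intro p hp
      simp only [Finset.mem_filter, Finset.mem_powerset]
      exact ⟨Finset.subset_univ _, insert_nonempty _ _⟩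
    · intro Ψ hΨ
      have h : Ψ.Nonempty := (Finset.mem_filter.1 hΨ).2
      simp only [dif_pos h]
      exact Finset.insert_erase (Finset.min'_mem _ h)
    · intro p hp
      have hS : p.2 ⊆ Ioi p.1 := Finset.mem_powerset.1 (Finset.mem_sigma.1 hp).2
      have hne : (insert p.1 p.2).Nonempty := insert_nonempty _ _
      have hm := hmin p.1 p.2 hS hne
      have hi : p.1 ∉ p.2 := fun h => lt_irrefl _ (Finset.mem_Ioi.1 (hS h))
      simp only [dif_pos hne, hm]
      rw [Finset.erase_insert hi]
    · intro Ψ hΨ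
      have h : Ψ.Nonempty := (Finset.mem_filter.1 hΨ).2
      simp only [dif_pos h]
      rw [Finset.insert_erase (Finset.min'_mem _ h)]
  rw [step1,
    ← Finset.sum_sigma' (Finset.univ : Finset (Fin n)) (fun i => (Ioi i).powerset)
        (fun a S => F (insert a S))]
  refine Finset.sum_congr rfl ?_
  intro i _
  have hkey : ∀ S ∈ (Ioi i).powerset, F (insert i S)
      = (l * w i * ((1 - P i) * ∏ j ∈ Iio i, (1 - P j))) *
        ((∏ j ∈ S, P j) * ∏ j ∈ Ioi i \ S, (1 - P j)) := by
    intro S hS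
    have hS' : S ⊆ Ioi i := Finset.mem_powerset.1 hS
    have hi : i ∉ S := fun h => lt_irrefl _ (Finset.mem_Ioi.1 (hS' h))
    have hne : (insert i S).Nonempty := insert_nonempty _ _
    have hm := hmin i S hS' hne
    have hcompl : (insert i S)ᶜ = Iio i ∪ (Ioi i \ S) := by
      ext j
      simp only [Finset.mem_compl, Finset.mem_insert, Finset.mem_union, Finset.mem_Iio,
        Finset.mem_sdiff, Finset.mem_Ioi, not_or]
      constructor
      · rintro ⟨hji, hjS⟩
        rcases lt_or_gt_of_ne hji with h' | h'
        · exact Or.inl h'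
        · exact Or.inr ⟨h', hjS⟩
      · rintro (h' | ⟨h', hjS⟩)
        · exact ⟨ne_of_lt h', fun hj => absurd (Finset.mem_Ioi.1 (hS' hj)) (not_lt_of_gt h')⟩
        · exact ⟨ne_of_gt h', hjS⟩
    have hdisj : Disjoint (Iio i) (Ioi i \ S) :=
      (Finset.disjoint_left).2 fun j hj hj' =>
        lt_asymm (Finset.mem_Iio.1 hj) (Finset.mem_Ioi.1 (Finset.mem_sdiff.1 hj').1)
    simp only [hF, dif_pos hne, hm]
    rw [Finset.prod_insert hi, hcompl, Finset.prod_union hdisj]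
    have hPi := (hP0 i).ne'
    field_simp
  rw [Finset.sum_congr rfl hkey, ← Finset.mul_sum, ← Finset.prod_add]
  have h1 : ∏ j ∈ Ioi i, (P j + (1 - P j)) = 1 := by
    apply Finset.prod_eq_one; intro j _; ring
  rw [h1, mul_one]
  have h2 : Finset.univ.filter (· ≤ i) = insert i (Iio i) := by
    ext j
    simp [Finset.mem_insert, Finset.mem_Iio, le_iff_lt_or_eq, or_comm]
  rw [h2, Finset.prod_insert (by simp)]
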